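/- Let r ≤ n and let u₁, …, u_r ∈ ℝⁿ be linearly independent. Define 𝔤_lin := { (S, v) ∈ ℝ^{n×n} × ℝⁿ : Sᵀ = −S, S u_i = 0 for all i = 1, …, r, and ⟨u_i, v⟩ = 0 for all i = 1, …, r }. Then: (a) 𝔤_lin is an ℝ-linear subspace of ℝ^{n×n} × ℝⁿ of dimension (n−r)(n−r+1)/2; and (b) for every continuously differentiable φ : ℝ^r → ℝ, setting F(x) := φ(⟨u₁, x⟩, …, ⟨u_r, x⟩), every (S, v) ∈ 𝔤_lin satisfies DF(x)(S x + v) = 0 for all x ∈ ℝⁿ, where DF(x) is the Fréchet derivative of F at x. -/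

import Mathlib

open Matrix

section helpers
variable {n : ℕ}

theorem dot_vsum {ι : Type*} (s : Finset ι) (f : ι → (Fin n → ℝ)) (x : Fin n → ℝ) :
    x ⬝ᵥ (∑ i ∈ s, f i) = ∑ i ∈ s, x ⬝ᵥ f i := by
  simp only [dotProduct, Finset.sum_apply, Finset.mul_sum]
  exact Finset.sum_comm

theorem vsum_mulVec {ι : Type*} (s : Finset ι) (f : ι → Matrix (Fin n) (Fin n) ℝ)
    (x : Fin n → ℝ) : (∑ i ∈ s, f i) *ᵥ x = ∑ i ∈ s, f i *ᵥ x := by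
  funext j
  simp only [mulVec, dotProduct, Finset.sum_apply, Matrix.sum_apply, Finset.sum_mul]
  exact Finset.sum_comm

theorem mulVec_vsum {ι : Type*} (s : Finset ι) (A : Matrix (Fin n) (Fin n) ℝ)
    (f : ι → (Fin n → ℝ)) : A *ᵥ (∑ i ∈ s, f i) = ∑ i ∈ s, A *ᵥ f i := by
  funext j
  simp only [mulVec, dotProduct, Finset.sum_apply, Finset.mul_sum]
  exact Finset.sum_comm

theorem vecMulVec_mulVec (a b x : Fin n → ℝ) : vecMulVec a b *ᵥ x = (b ⬝ᵥ x) • a := by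
  funext j
  simp only [mulVec, dotProduct, vecMulVec_apply, Pi.smul_apply, smul_eq_mul]
  rw [Finset.sum_mul]
  exact Finset.sum_congr rfl fun t _ => by ring

theorem skew_dot {S : Matrix (Fin n) (Fin n) ℝ} (hS : Sᵀ = -S) (x y : Fin n → ℝ) :
    x ⬝ᵥ (S *ᵥ y) = -(y ⬝ᵥ (S *ᵥ x)) := by
  rw [dotProduct_mulVec, ← Matrix.mulVec_transpose, hS, Matrix.neg_mulVec, neg_dotProduct,
    dotProduct_comm]

end helpers

/-- skew-symmetric matrices as a submodule -/
def skewSub (m : ℕ) : Submodule ℝ (Matrix (Fin m) (Fin m) ℝ) where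
  carrier := {M | Mᵀ = -M}
  add_mem' := by intro a b ha hb; simp_all [Matrix.transpose_add]; abel
  zero_mem' := by simp
  smul_mem' := by intro c a ha; simp_all [Matrix.transpose_smul]

noncomputable def skewEquiv (m : ℕ) :
    skewSub m ≃ₗ[ℝ] ({p : Fin m × Fin m // p.1 < p.2} → ℝ) where
  toFun M := fun p => (M : Matrix (Fin m) (Fin m) ℝ) p.1.1 p.1.2
  map_add' a b := rfl
  map_smul' c a := rfl
  invFun f := ⟨Matrix.of fun i j =>
      if h : i < j then f ⟨(i,j), h⟩ else if h : j < i then -f ⟨(j,i), h⟩ else 0, by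
    show _ = _
    ext i j
    simp only [Matrix.transpose_apply, Matrix.neg_apply, Matrix.of_apply]
    rcases lt_trichotomy i j with h | h | h
    · rw [dif_neg (by omega : ¬ j < i), dif_pos h, dif_pos h]
    · subst h; simp
    · rw [dif_pos h, dif_neg (by omega : ¬ i < j), dif_pos h, neg_neg]⟩
  left_inv := by
    rintro ⟨M, hM⟩
    ext i j
    simp only [Matrix.of_apply]
    rcases lt_trichotomy i j with h | h | h
    · rw [dif_pos h]
    · subst h
      rw [dif_neg (lt_irrefl i), dif_neg (lt_irrefl i)]
      have := congrFun (congrFun hM i) i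
      simp only [Matrix.transpose_apply, Matrix.neg_apply] at this
      linarith
    · rw [dif_neg (by omega : ¬ i < j), dif_pos h]
      have := congrFun (congrFun hM j) i
      simp only [Matrix.transpose_apply, Matrix.neg_apply] at this
      linarith
  right_inv := by
    intro f
    funext p
    simp only [Matrix.of_apply]
    rw [dif_pos p.2]

def ltEquiv (m : ℕ) : {p : Fin m × Fin m // p.1 < p.2} ≃ Σ j : Fin m, Fin j where
  toFun p := ⟨p.1.2, ⟨p.1.1, p.2⟩⟩
  invFun q := ⟨(⟨q.2, lt_trans q.2.2 q.1.2⟩, q.1), q.2.2⟩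
  left_inv p := by rcases p with ⟨⟨a, b⟩, h⟩; rfl
  right_inv q := by rcases q with ⟨j, k⟩; rfl

theorem card_lt (m : ℕ) : Fintype.card {p : Fin m × Fin m // p.1 < p.2} = m * (m-1) / 2 := by
  rw [Fintype.card_congr (ltEquiv m), Fintype.card_sigma]
  simp only [Fintype.card_fin]
  rw [show (∑ x : Fin m, (x:ℕ)) = ∑ i ∈ Finset.range m, i from Fin.sum_univ_eq_sum_range (fun i => i) m]
  rw [Finset.sum_range_id]

theorem finrank_skewSub (m : ℕ) : Module.finrank ℝ (skewSub m) = m * (m-1) / 2 := by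
  rw [(skewEquiv m).finrank_eq, Module.finrank_pi, card_lt]

section main
variable {n r m : ℕ} (u : Fin r → Fin n → ℝ) (e : Fin m → Fin n → ℝ)

set_option maxHeartbeats 2000000 in
/-- the main linear equivalence -/
noncomputable def bigEquiv
    (he1 : ∀ k l, e k ⬝ᵥ e l = if k = l then 1 else 0)
    (he2 : ∀ i k, u i ⬝ᵥ e k = 0)
    (he3 : ∀ v : Fin n → ℝ, (∀ i, u i ⬝ᵥ v = 0) → v = ∑ k, (e k ⬝ᵥ v) • e k)
    (he4 : ∀ x : Fin n → ℝ, ∃ (a : Fin r → ℝ) (q : Fin n → ℝ),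
        x = (∑ i, a i • u i) + q ∧ ∀ i, u i ⬝ᵥ q = 0)
    (g : Submodule ℝ (Matrix (Fin n) (Fin n) ℝ × (Fin n → ℝ)))
    (hg : ∀ p : Matrix (Fin n) (Fin n) ℝ × (Fin n → ℝ), p ∈ g ↔
      (p.1)ᵀ = -p.1 ∧ (∀ i : Fin r, p.1.mulVec (u i) = 0) ∧
        ∀ i : Fin r, u i ⬝ᵥ p.2 = 0) :
    g ≃ₗ[ℝ] (skewSub m × (Fin m → ℝ)) := by
  refine LinearEquiv.ofLinear
    { toFun := fun p => (⟨Matrix.of fun k l => e k ⬝ᵥ ((p : Matrix (Fin n) (Fin n) ℝ × (Fin n → ℝ)).1 *ᵥ e l), by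
        obtain ⟨hS, hSu, hv⟩ := (hg p.1).1 p.2
        show _ = _
        ext k l
        simp only [Matrix.transpose_apply, Matrix.neg_apply, Matrix.of_apply]
        exact skew_dot hS (e l) (e k)⟩,
        fun k => e k ⬝ᵥ (p : Matrix (Fin n) (Fin n) ℝ × (Fin n → ℝ)).2)
      map_add' := ?_
      map_smul' := ?_ }
    { toFun := fun q => ⟨(∑ k, ∑ l, (q.1 : Matrix (Fin m) (Fin m) ℝ) k l • vecMulVec (e k) (e l),
        ∑ k, q.2 k • e k), by
        rcases q with ⟨⟨M, hM⟩, w⟩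
        rw [hg]
        refine ⟨?_, ?_, ?_⟩
        · -- skew
          show _ = _
          ext i j
          simp only [Matrix.transpose_apply, Matrix.neg_apply, Matrix.sum_apply, Matrix.smul_apply,
            vecMulVec_apply, smul_eq_mul]
          rw [Finset.sum_comm, ← Finset.sum_neg_distrib]
          refine Finset.sum_congr rfl fun k _ => ?_
          rw [← Finset.sum_neg_distrib]
          refine Finset.sum_congr rfl fun l _ => ?_
          have hMkl : M l k = -M k l := by
            have := congrFun (congrFun hM k) l
            simpa using this
          rw [hMkl]; ring
        · -- mulVec u i = 0
          intro i
          rw [vsum_mulVec]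
          refine Finset.sum_eq_zero fun k _ => ?_
          rw [vsum_mulVec]
          refine Finset.sum_eq_zero fun l _ => ?_
          rw [Matrix.smul_mulVec, vecMulVec_mulVec, dotProduct_comm, he2]
          simp
        · -- dot with v
          intro i
          rw [dot_vsum]
          refine Finset.sum_eq_zero fun k _ => ?_
          rw [dotProduct_smul, he2]
          simp⟩
      map_add' := ?_
      map_smul' := ?_ } ?_ ?_
  · -- map_add of F
    rintro ⟨⟨A, a⟩, hA⟩ ⟨⟨B, b⟩, hB⟩
    refine Prod.ext (Subtype.ext ?_) ?_ <;> ext <;>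
      simp [Matrix.add_mulVec, dotProduct_add]
  · -- map_smul of F
    rintro c ⟨⟨A, a⟩, hA⟩
    refine Prod.ext (Subtype.ext ?_) ?_ <;> ext <;>
      simp [Matrix.smul_mulVec, dotProduct_smul]
  · -- map_add of G
    rintro ⟨M1, w1⟩ ⟨M2, w2⟩
    refine Subtype.ext (Prod.ext ?_ ?_) <;>
      simp [add_smul, Finset.sum_add_distrib]
  · -- map_smul of G
    rintro c ⟨M, w⟩
    refine Subtype.ext (Prod.ext ?_ ?_) <;>
      simp [smul_smul, Finset.smul_sum]
  · -- F ∘ G = id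
    apply LinearMap.ext
    rintro ⟨⟨M, hM⟩, w⟩
    refine Prod.ext (Subtype.ext ?_) ?_
    · ext k l
      simp only [LinearMap.coe_comp, Function.comp_apply, LinearMap.coe_mk, AddHom.coe_mk,
        Matrix.of_apply, LinearMap.id_coe, id_eq]
      rw [vsum_mulVec, dot_vsum]
      rw [Finset.sum_eq_single k]
      · rw [vsum_mulVec, dot_vsum, Finset.sum_eq_single l]
        · rw [Matrix.smul_mulVec, vecMulVec_mulVec, he1, if_pos rfl]
          simp only [one_smul, dotProduct_smul, he1, if_pos rfl, smul_eq_mul, mul_one]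
          simp
        · intro b _ hb
          rw [Matrix.smul_mulVec, vecMulVec_mulVec, he1, if_neg hb]
          simp
        · intro h; exact absurd (Finset.mem_univ l) h
      · intro a _ ha
        rw [vsum_mulVec, dot_vsum]
        refine Finset.sum_eq_zero fun b _ => ?_
        rw [Matrix.smul_mulVec, vecMulVec_mulVec, dotProduct_smul, dotProduct_smul,
          he1 k a, if_neg (Ne.symm ha)]
        simp
      · intro h; exact absurd (Finset.mem_univ k) h
    · funext k
      simp only [LinearMap.coe_comp, Function.comp_apply, LinearMap.coe_mk, AddHom.coe_mk,
        LinearMap.id_coe, id_eq]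
      rw [dot_vsum, Finset.sum_eq_single k]
      · rw [dotProduct_smul, he1, if_pos rfl]; simp
      · intro b _ hb
        rw [dotProduct_smul, he1, if_neg (Ne.symm hb)]; simp
      · intro h; exact absurd (Finset.mem_univ k) h
  · -- G ∘ F = id
    apply LinearMap.ext
    rintro ⟨⟨S, v⟩, hmem⟩
    obtain ⟨hS, hSu, hv⟩ := (hg _).1 hmem
    refine Subtype.ext (Prod.ext ?_ ?_)
    · -- matrix part
      show (∑ k, ∑ l, (e k ⬝ᵥ (S *ᵥ e l)) • vecMulVec (e k) (e l)) = S
      have hperp : ∀ l i, u i ⬝ᵥ (S *ᵥ e l) = 0 := by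
        intro l i
        rw [skew_dot hS, hSu i, dotProduct_zero, neg_zero]
      have hSel : ∀ l, S *ᵥ e l = ∑ k, (e k ⬝ᵥ (S *ᵥ e l)) • e k := fun l => he3 _ (hperp l)
      have key : ∀ x : Fin n → ℝ,
          (∑ k, ∑ l, (e k ⬝ᵥ (S *ᵥ e l)) • vecMulVec (e k) (e l)) *ᵥ x = S *ᵥ x := by
        intro x
        obtain ⟨a, q, rfl, hq⟩ := he4 x
        have hx1 : S *ᵥ ((∑ i, a i • u i) + q) = S *ᵥ q := by
          rw [Matrix.mulVec_add, mulVec_vsum]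
          rw [Finset.sum_eq_zero fun i _ => by rw [Matrix.mulVec_smul, hSu i, smul_zero]]
          rw [zero_add]
        have hdot : ∀ l, e l ⬝ᵥ ((∑ i, a i • u i) + q) = e l ⬝ᵥ q := by
          intro l
          rw [dotProduct_add, dot_vsum]
          rw [Finset.sum_eq_zero fun i _ => by
            rw [dotProduct_smul, dotProduct_comm, he2, smul_zero]]
          rw [zero_add]
        rw [hx1, vsum_mulVec]
        have : ∀ k, (∑ l, (e k ⬝ᵥ (S *ᵥ e l)) • vecMulVec (e k) (e l)) *ᵥ ((∑ i, a i • u i) + q)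
            = ∑ l, ((e l ⬝ᵥ q) * (e k ⬝ᵥ (S *ᵥ e l))) • e k := by
          intro k
          rw [vsum_mulVec]
          refine Finset.sum_congr rfl fun l _ => ?_
          rw [Matrix.smul_mulVec, vecMulVec_mulVec, hdot l, smul_smul, mul_comm]
        rw [Finset.sum_congr rfl fun k _ => this k]
        -- now: ∑ k ∑ l ((e l ⬝ᵥ q) * M k l) • e k = S *ᵥ q
        rw [Finset.sum_comm]
        have hq2 : S *ᵥ q = ∑ l, (e l ⬝ᵥ q) • (S *ᵥ e l) := by
          conv_lhs => rw [he3 q hq, mulVec_vsum]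
          exact Finset.sum_congr rfl fun l _ => by rw [Matrix.mulVec_smul]
        rw [hq2]
        refine Finset.sum_congr rfl fun l _ => ?_
        conv_rhs => rw [hSel l]
        rw [Finset.smul_sum]
        exact Finset.sum_congr rfl fun k _ => by rw [smul_smul]
      ext i j
      simpa using congrFun (key (Pi.single j 1)) i
    · -- vector part
      show (∑ k, (e k ⬝ᵥ v) • e k) = v
      exact (he3 v hv).symm

end main


theorem exists_good_basis (n r : ℕ) (hrn : r ≤ n) (u : Fin r → Fin n → ℝ)
    (hLI : LinearIndependent ℝ u) :
    ∃ e : Fin (n-r) → (Fin n → ℝ),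
      (∀ k l, e k ⬝ᵥ e l = if k = l then 1 else 0) ∧
      (∀ i k, u i ⬝ᵥ e k = 0) ∧
      (∀ v : Fin n → ℝ, (∀ i, u i ⬝ᵥ v = 0) → v = ∑ k, (e k ⬝ᵥ v) • e k) ∧
      (∀ x : Fin n → ℝ, ∃ (a : Fin r → ℝ) (q : Fin n → ℝ),
        x = (∑ i, a i • u i) + q ∧ ∀ i, u i ⬝ᵥ q = 0) := by
  classical
  set E := EuclideanSpace ℝ (Fin n)
  let L : (Fin n → ℝ) ≃ₗ[ℝ] E := (WithLp.linearEquiv 2 ℝ (Fin n → ℝ)).symm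
  have hinner : ∀ x y : Fin n → ℝ, (inner ℝ (L x) (L y) : ℝ) = x ⬝ᵥ y := by
    intro x y
    rw [PiLp.inner_apply]
    simp only [RCLike.inner_apply, dotProduct, starRingEnd_apply, star_trivial]
    exact Finset.sum_congr rfl fun i _ => mul_comm _ _
  let uE : Fin r → E := fun i => L (u i)
  have hLIE : LinearIndependent ℝ uE := hLI.map' L.toLinearMap L.ker
  set W : Submodule ℝ E := Submodule.span ℝ (Set.range uE) with hW
  have hWrank : Module.finrank ℝ W = r := by
    rw [finrank_span_eq_card hLIE, Fintype.card_fin]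
  have hWorth : Module.finrank ℝ (Wᗮ) = n - r := by
    have h1 : Module.finrank ℝ W + Module.finrank ℝ Wᗮ = n := by
      rw [Submodule.finrank_add_finrank_orthogonal]
      simp [E]
    omega
  let c : OrthonormalBasis (Fin (n-r)) ℝ Wᗮ :=
    (stdOrthonormalBasis ℝ Wᗮ).reindex (finCongr hWorth)
  let e : Fin (n-r) → (Fin n → ℝ) := fun k => L.symm ((c k : E))
  have hLe : ∀ k, L (e k) = (c k : E) := fun k => L.apply_symm_apply _
  have hmemorth : ∀ v : Fin n → ℝ, (∀ i, u i ⬝ᵥ v = 0) → L v ∈ Wᗮ := by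
    intro v hv
    rw [Submodule.mem_orthogonal]
    intro w hw
    induction hw using Submodule.span_induction with
    | mem w hw => obtain ⟨i, rfl⟩ := hw; rw [hinner]; exact hv i
    | zero => simp
    | add a b _ _ ha hb => rw [inner_add_left, ha, hb, add_zero]
    | smul t a _ ha => rw [inner_smul_left, ha, mul_zero]
  refine ⟨e, ?_, ?_, ?_, ?_⟩
  · intro k l
    have := c.orthonormal
    rw [orthonormal_iff_ite] at this
    have h2 := this k l
    rw [← hinner, hLe, hLe, ← Submodule.coe_inner, h2]
  · intro i k
    have := (c k).2
    rw [Submodule.mem_orthogonal] at this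
    have h2 := this (uE i) (Submodule.subset_span ⟨i, rfl⟩)
    rw [← hinner (u i) (e k), hLe]
    exact h2
  · intro v hv
    have hvW : L v ∈ Wᗮ := hmemorth v hv
    have hexp : ∑ k, (inner ℝ ((c k : E)) (L v) : ℝ) • (c k : E) = L v := by
      have h3 := c.sum_repr' ⟨L v, hvW⟩
      have h4 := congrArg (Subtype.val) h3
      push_cast at h4
      simpa [Submodule.coe_inner] using h4
    have h5 : v = L.symm (∑ k, (inner ℝ ((c k : E)) (L v) : ℝ) • (c k : E)) := by
      rw [hexp]
      exact (L.symm_apply_apply v).symm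
    conv_lhs => rw [h5, map_sum]
    refine Finset.sum_congr rfl fun k _ => ?_
    rw [_root_.map_smul]
    have : (inner ℝ ((c k : E)) (L v) : ℝ) = e k ⬝ᵥ v := by rw [← hinner (e k) v, hLe]
    rw [this]
  · intro x
    have hdecomp : L x = (Submodule.orthogonalProjectionOnto W (L x) : E)
        + (Submodule.orthogonalProjectionOnto Wᗮ (L x) : E) := by
      exact (W.starProjection_add_starProjection_orthogonal (L x)).symm
    have hp : ((Submodule.orthogonalProjectionOnto W (L x) : E)) ∈ W := Submodule.coe_mem _
    rw [hW, Submodule.mem_span_range_iff_exists_fun] at hp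
    obtain ⟨a, ha⟩ := hp
    refine ⟨a, L.symm ((Submodule.orthogonalProjectionOnto Wᗮ (L x) : E)), ?_, ?_⟩
    · apply L.injective
      have ha' : (∑ i, a i • L (u i)) = ((Submodule.orthogonalProjectionOnto W (L x)) : E) := ha
      rw [map_add, L.apply_symm_apply, map_sum]
      simp only [_root_.map_smul]
      rw [ha']
      exact hdecomp
    · intro i
      rw [← hinner, L.apply_symm_apply]
      have := (Submodule.orthogonalProjectionOnto Wᗮ (L x)).2
      rw [Submodule.mem_orthogonal] at this
      exact this (uE i) (Submodule.subset_span ⟨i, rfl⟩)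

theorem tri_arith (m : ℕ) : m * (m-1) / 2 + m = m * (m+1) / 2 := by
  rcases m with _ | k
  · simp
  · have h0 : k + 1 - 1 = k := rfl
    rw [h0]
    have e1 : Even ((k+1) * k) := by
      have := Nat.even_mul_succ_self k
      rwa [mul_comm] at this
    have e2 : Even ((k+1) * (k+1+1)) := Nat.even_mul_succ_self (k+1)
    have h1 : ((k+1) * k / 2) * 2 = (k+1) * k := Nat.div_mul_cancel e1.two_dvd
    have h2 : ((k+1) * (k+1+1) / 2) * 2 = (k+1) * (k+1+1) := Nat.div_mul_cancel e2.two_dvd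
    have h3 : (k+1) * (k+1+1) = (k+1) * k + 2 * (k+1) := by ring
    omega

/-- The linear-feature function `F(x) = φ(⟨u₁,x⟩, …, ⟨u_r,x⟩)`. -/
noncomputable def linFeat {n r : ℕ} (u : Fin r → Fin n → ℝ)
    (φ : (Fin r → ℝ) → ℝ) : (Fin n → ℝ) → ℝ :=
  fun x => φ (fun i => ∑ j, u i j * x j)

/-- For `r ≤ n` and linearly independent `u₁, …, u_r`, the set
`𝔤_lin = {(S,v) : Sᵀ = −S, S uᵢ = 0, ⟨uᵢ, v⟩ = 0}` is a linear subspace of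
`ℝ^{n×n} × ℝⁿ` of dimension `(n−r)(n−r+1)/2`, and each of its elements annihilates every
linear-feature function: `DF(x)(Sx + v) = 0` for all `x`. -/
theorem stmt11 (n r : ℕ) (hrn : r ≤ n) (u : Fin r → Fin n → ℝ)
    (hLI : LinearIndependent ℝ u) :
    ∃ g : Submodule ℝ (Matrix (Fin n) (Fin n) ℝ × (Fin n → ℝ)),
      (g : Set (Matrix (Fin n) (Fin n) ℝ × (Fin n → ℝ)))
        = {p | (p.1)ᵀ = -p.1 ∧ (∀ i : Fin r, p.1.mulVec (u i) = 0) ∧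
            ∀ i : Fin r, ∑ j, u i j * p.2 j = 0} ∧
      Module.finrank ℝ g = (n - r) * (n - r + 1) / 2 ∧
      ∀ φ : (Fin r → ℝ) → ℝ, ContDiff ℝ 1 φ →
        ∀ (S : Matrix (Fin n) (Fin n) ℝ) (v : Fin n → ℝ),
          Sᵀ = -S → (∀ i : Fin r, S.mulVec (u i) = 0) →
          (∀ i : Fin r, ∑ j, u i j * v j = 0) →
          ∀ x : Fin n → ℝ, fderiv ℝ (linFeat u φ) x (S.mulVec x + v) = 0 := by
  classical
  obtain ⟨e, he1, he2, he3, he4⟩ := exists_good_basis n r hrn u hLI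
  have hadd : ∀ a b : Matrix (Fin n) (Fin n) ℝ × (Fin n → ℝ),
      a ∈ {p : Matrix (Fin n) (Fin n) ℝ × (Fin n → ℝ) | (p.1)ᵀ = -p.1 ∧
        (∀ i : Fin r, p.1.mulVec (u i) = 0) ∧ ∀ i : Fin r, ∑ j, u i j * p.2 j = 0} →
      b ∈ {p : Matrix (Fin n) (Fin n) ℝ × (Fin n → ℝ) | (p.1)ᵀ = -p.1 ∧
        (∀ i : Fin r, p.1.mulVec (u i) = 0) ∧ ∀ i : Fin r, ∑ j, u i j * p.2 j = 0} →
      a + b ∈ {p : Matrix (Fin n) (Fin n) ℝ × (Fin n → ℝ) | (p.1)ᵀ = -p.1 ∧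
        (∀ i : Fin r, p.1.mulVec (u i) = 0) ∧ ∀ i : Fin r, ∑ j, u i j * p.2 j = 0} := by
    rintro ⟨A, a⟩ ⟨B, b⟩ ⟨h1, h2, h3⟩ ⟨g1, g2, g3⟩
    refine ⟨?_, fun i => ?_, fun i => ?_⟩
    · show (A + B)ᵀ = -(A + B)
      rw [Matrix.transpose_add, h1, g1, neg_add]
    · show (A + B) *ᵥ u i = 0
      rw [Matrix.add_mulVec, h2 i, g2 i, add_zero]
    · show ∑ j, u i j * (a + b) j = 0
      have h4 : ∀ j, u i j * (a + b) j = u i j * a j + u i j * b j := fun j => by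
        simp [mul_add]
      rw [Finset.sum_congr rfl fun j _ => h4 j, Finset.sum_add_distrib, h3 i, g3 i, add_zero]
  have hsmul : ∀ (c : ℝ) (a : Matrix (Fin n) (Fin n) ℝ × (Fin n → ℝ)),
      a ∈ {p : Matrix (Fin n) (Fin n) ℝ × (Fin n → ℝ) | (p.1)ᵀ = -p.1 ∧
        (∀ i : Fin r, p.1.mulVec (u i) = 0) ∧ ∀ i : Fin r, ∑ j, u i j * p.2 j = 0} →
      c • a ∈ {p : Matrix (Fin n) (Fin n) ℝ × (Fin n → ℝ) | (p.1)ᵀ = -p.1 ∧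
        (∀ i : Fin r, p.1.mulVec (u i) = 0) ∧ ∀ i : Fin r, ∑ j, u i j * p.2 j = 0} := by
    rintro c ⟨A, a⟩ ⟨h1, h2, h3⟩
    refine ⟨?_, fun i => ?_, fun i => ?_⟩
    · show (c • A)ᵀ = -(c • A)
      rw [Matrix.transpose_smul, h1, smul_neg]
    · show (c • A) *ᵥ u i = 0
      rw [Matrix.smul_mulVec, h2 i, smul_zero]
    · show ∑ j, u i j * (c • a) j = 0
      have h4 : ∀ j, u i j * (c • a) j = c * (u i j * a j) := fun j => by
        simp; ring
      rw [Finset.sum_congr rfl fun j _ => h4 j, ← Finset.mul_sum, h3 i, mul_zero]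
  set g : Submodule ℝ (Matrix (Fin n) (Fin n) ℝ × (Fin n → ℝ)) :=
    { carrier := {p | (p.1)ᵀ = -p.1 ∧ (∀ i : Fin r, p.1.mulVec (u i) = 0) ∧
        ∀ i : Fin r, ∑ j, u i j * p.2 j = 0}
      add_mem' := fun {a} {b} ha hb => hadd a b ha hb
      zero_mem' := ⟨by simp, fun i => by simp, fun i => by simp⟩
      smul_mem' := fun c a ha => hsmul c a ha } with hgdef
  have hg : ∀ p : Matrix (Fin n) (Fin n) ℝ × (Fin n → ℝ), p ∈ g ↔
      (p.1)ᵀ = -p.1 ∧ (∀ i : Fin r, p.1.mulVec (u i) = 0) ∧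
        ∀ i : Fin r, u i ⬝ᵥ p.2 = 0 := fun p => Iff.rfl
  refine ⟨g, rfl, ?_, ?_⟩
  · -- dimension
    rw [(bigEquiv u e he1 he2 he3 he4 g hg).finrank_eq, Module.finrank_prod, finrank_skewSub,
      Module.finrank_pi, Fintype.card_fin]
    exact tri_arith (n - r)
  · -- part (b)
    intro φ hφ S v hS hSu hv x
    let T : (Fin n → ℝ) →ₗ[ℝ] (Fin r → ℝ) :=
      { toFun := fun y i => u i ⬝ᵥ y
        map_add' := fun a b => by funext i; simp [dotProduct_add]
        map_smul' := fun c a => by funext i; simp [dotProduct_smul] }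
    let Tc : (Fin n → ℝ) →L[ℝ] (Fin r → ℝ) := T.toContinuousLinearMap
    have hfe : linFeat u φ = φ ∘ Tc := rfl
    have hT0 : Tc (S *ᵥ x + v) = 0 := by
      funext i
      show u i ⬝ᵥ (S *ᵥ x + v) = 0
      have h1 : u i ⬝ᵥ (S *ᵥ x) = 0 := by
        rw [dotProduct_mulVec, ← Matrix.mulVec_transpose, hS, Matrix.neg_mulVec, hSu i,
          neg_zero, zero_dotProduct]
      rw [dotProduct_add, h1]
      have h2 : u i ⬝ᵥ v = 0 := hv i
      rw [h2, add_zero]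
    have hd : DifferentiableAt ℝ φ (Tc x) := (hφ.differentiable one_ne_zero).differentiableAt
    rw [hfe, fderiv_comp x hd Tc.differentiableAt, Tc.fderiv]
    simp only [ContinuousLinearMap.coe_comp', Function.comp_apply, hT0, map_zero]
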